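/- Every open convex subset W of ℍ^n is a domain of ℋ_RSL-holomorphy. -/

import Mathlib

noncomputable section

open scoped ComplexConjugate

/-- The first complex component of a quaternion `q = t + u·j`, identifying `ℂ` with the
real span of `1` and `i` inside the quaternions: `t = q.re + q.imI * I`. -/
def qt (q : Quaternion ℝ) : ℂ := ⟨q.re, q.imI⟩

/-- The second complex component of a quaternion `q = t + u·j`: `u = q.imJ + q.imK * I`. -/
def qu (q : Quaternion ℝ) : ℂ := ⟨q.imJ, q.imK⟩

/-- The quaternion `t + u·j` built from two complex numbers. -/
def mkQ (t u : ℂ) : Quaternion ℝ := ⟨t.re, t.im, u.re, u.im⟩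

/-- `f : ℍ^n → ℍ` is right superlinearly superdifferentiable (RSS) on `U`:
writing `f = f₁ + f₂·j` with `f₁ = qt ∘ f`, `f₂ = qu ∘ f`, and each coordinate
`z_k = t_k + u_k·j`, the component `f₁` is jointly holomorphic in `(t₁,…,t_n)` and
antiholomorphic in `(u₁,…,u_n)` (i.e. `(t, v) ↦ f₁` at `u_k = conj (v_k)` is jointly
holomorphic), and `f₂` is jointly holomorphic in the `u`'s and antiholomorphic in the `t`'s. -/
def RSS {n : ℕ} (U : Set (Fin n → Quaternion ℝ))
    (f : (Fin n → Quaternion ℝ) → Quaternion ℝ) : Prop :=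
  DifferentiableOn ℂ
    (fun p : (Fin n → ℂ) × (Fin n → ℂ) =>
      qt (f fun k => mkQ (p.1 k) (conj (p.2 k))))
    {p | (fun k => mkQ (p.1 k) (conj (p.2 k))) ∈ U} ∧
  DifferentiableOn ℂ
    (fun p : (Fin n → ℂ) × (Fin n → ℂ) =>
      qu (f fun k => mkQ (conj (p.1 k)) (p.2 k)))
    {p | (fun k => mkQ (conj (p.1 k)) (p.2 k)) ∈ U}

/-- `W` is a domain of `ℋ_RSL`-holomorphy: for all open sets `U, V` with
`∅ ≠ U ⊆ V ∩ W`, `V ∩ W ≠ V` and `V` connected, there exists a function `f` RSS on `W`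
such that no function `g` RSS on `V` agrees with `f` on `U`. -/
def IsRSLDomainOfHolomorphy {n : ℕ} (W : Set (Fin n → Quaternion ℝ)) : Prop :=
  ∀ U V : Set (Fin n → Quaternion ℝ), IsOpen U → IsOpen V →
    U.Nonempty → U ⊆ V ∩ W → V ∩ W ≠ V → IsConnected V →
    ∃ f : (Fin n → Quaternion ℝ) → Quaternion ℝ, RSS W f ∧
      ∀ g : (Fin n → Quaternion ℝ) → Quaternion ℝ, RSS V g → ¬ Set.EqOn g f U

namespace RSLAux

open Filter Set Metric Topology

lemma qt_mkQ (t u : ℂ) : qt (mkQ t u) = t := rfl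
lemma qu_mkQ (t u : ℂ) : qu (mkQ t u) = u := rfl
lemma mkQ_qt_qu (q : Quaternion ℝ) : mkQ (qt q) (qu q) = q := rfl

def qi : Quaternion ℝ := ⟨0,1,0,0⟩
def qj : Quaternion ℝ := ⟨0,0,1,0⟩
def qk : Quaternion ℝ := ⟨0,0,0,1⟩

lemma q_decomp (q : Quaternion ℝ) :
    q = q.re • (1 : Quaternion ℝ) + q.imI • qi + q.imJ • qj + q.imK • qk := by
  ext <;> simp [Quaternion.re_smul, Quaternion.imI_smul, Quaternion.imJ_smul, Quaternion.imK_smul] <;> simp [qi, qj, qk, Quaternion.re_one, Quaternion.imI_one, Quaternion.imJ_one, Quaternion.imK_one]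

lemma qt_eq (q : Quaternion ℝ) : qt q = (q.re : ℂ) + q.imI * Complex.I := by
  apply Complex.ext <;> simp [qt]

lemma qu_eq (q : Quaternion ℝ) : qu q = (q.imJ : ℂ) + q.imK * Complex.I := by
  apply Complex.ext <;> simp [qu]

lemma continuous_qt : Continuous qt := by
  simp only [funext qt_eq]
  exact (Complex.continuous_ofReal.comp Quaternion.continuous_re).add
    ((Complex.continuous_ofReal.comp Quaternion.continuous_imI).mul continuous_const)

lemma continuous_qu : Continuous qu := by
  simp only [funext qu_eq]
  exact (Complex.continuous_ofReal.comp Quaternion.continuous_imJ).add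
    ((Complex.continuous_ofReal.comp Quaternion.continuous_imK).mul continuous_const)

lemma mkQ_decomp (t u : ℂ) :
    mkQ t u = t.re • (1 : Quaternion ℝ) + t.im • qi + u.re • qj + u.im • qk := by
  ext <;> simp [Quaternion.re_smul, Quaternion.imI_smul, Quaternion.imJ_smul, Quaternion.imK_smul] <;> simp [mkQ, qi, qj, qk, Quaternion.re_one, Quaternion.imI_one, Quaternion.imJ_one, Quaternion.imK_one]

lemma continuous_mkQ : Continuous fun p : ℂ × ℂ => mkQ p.1 p.2 := by
  simp only [mkQ_decomp]
  exact ((((Complex.continuous_re.comp continuous_fst).smul continuous_const).add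
    ((Complex.continuous_im.comp continuous_fst).smul continuous_const)).add
    ((Complex.continuous_re.comp continuous_snd).smul continuous_const)).add
    ((Complex.continuous_im.comp continuous_snd).smul continuous_const)

/-- Identity principle for ℂ-differentiable functions on an open preconnected set in a
complex normed space, via restriction to complex lines. -/
lemma eqOn_zero_of_diffOn {E : Type*} [NormedAddCommGroup E] [NormedSpace ℂ E]
    {G : E → ℂ} {s : Set E} (hs : IsOpen s) (hc : IsPreconnected s)
    (hG : DifferentiableOn ℂ G s) {x : E} (hx : x ∈ s) (hx0 : G =ᶠ[𝓝 x] 0) :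
    Set.EqOn G 0 s := by
  set S : Set E := {p | p ∈ s ∧ G =ᶠ[𝓝 p] 0} with hS
  have key : ∀ p ∈ s, ∀ ε > (0:ℝ), ball p ε ⊆ s → ∀ q ∈ S, dist q p < ε / 2 →
      ∀ w ∈ ball q (ε/2), G w = 0 := by
    intro p hp ε hε hball q hq hqp w hw
    have hsub : ball q (ε/2) ⊆ s := fun y hy => hball (by
      have : dist y p < ε := by
        calc dist y p ≤ dist y q + dist q p := dist_triangle _ _ _
          _ < ε/2 + ε/2 := add_lt_add hy hqp
          _ = ε := by ring
      simpa [mem_ball] using this)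
    rcases eq_or_ne w q with rfl | hwq
    · exact hq.2.self_of_nhds
    · set L : ℂ → E := fun lam => q + lam • (w - q) with hL
      have hLcont : Continuous L := by fun_prop
      set R : ℝ := (ε/2) / ‖w - q‖ with hR
      have hwq' : (0:ℝ) < ‖w - q‖ := by simpa [sub_eq_zero] using hwq
      have hR1 : (1:ℝ) < R := by
        rw [hR, lt_div_iff₀ hwq']
        simpa [dist_eq_norm] using hw
      have hmaps : ∀ lam ∈ ball (0:ℂ) R, L lam ∈ ball q (ε/2) := by
        intro lam hlam
        have : ‖lam‖ < R := by simpa [mem_ball, dist_eq_norm] using hlam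
        have : ‖lam‖ * ‖w - q‖ < ε/2 := by
          rw [← lt_div_iff₀ hwq']; exact this
        simpa [hL, mem_ball, dist_eq_norm, norm_smul] using this
      have hdiff : DifferentiableOn ℂ (G ∘ L) (ball (0:ℂ) R) := by
        apply DifferentiableOn.comp (hG.mono hsub)
        · exact (differentiable_const q).differentiableOn.add
            ((differentiable_id.smul_const (w - q)).differentiableOn)
        · exact hmaps
      have han : AnalyticOnNhd ℂ (G ∘ L) (ball (0:ℂ) R) :=
        hdiff.analyticOnNhd isOpen_ball
      have h0mem : (0:ℂ) ∈ ball (0:ℂ) R := by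
        simp [mem_ball, lt_trans one_pos hR1]
      have hev : (G ∘ L) =ᶠ[𝓝 (0:ℂ)] 0 := by
        have hL0 : L 0 = q := by simp [hL]
        have hcont : ContinuousAt L 0 := hLcont.continuousAt
        have : Tendsto L (𝓝 0) (𝓝 q) := by
          have := hcont.tendsto
          rwa [hL0] at this
        exact (hq.2.comp_tendsto this)
      have := han.eqOn_zero_of_preconnected_of_eventuallyEq_zero
        (convex_ball _ _).isPreconnected h0mem hev
      have h1 : (1:ℂ) ∈ ball (0:ℂ) R := by simpa [mem_ball] using hR1
      have := this h1
      simpa [hL] using this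
  have hSopen : IsOpen S := by
    apply isOpen_iff_mem_nhds.2
    intro p hp
    rcases Metric.isOpen_iff.1 hs p hp.1 with ⟨ε, hε, hball⟩
    have hsub : ball p (ε/2) ⊆ S := by
      intro y hy
      have hys : y ∈ s := hball (ball_subset_ball (by linarith) hy)
      refine ⟨hys, ?_⟩
      have h0 : ∀ w ∈ ball p (ε/2), G w = 0 :=
        key p hp.1 ε hε hball p hp (by simp [hε])
      exact eventually_of_mem (isOpen_ball.mem_nhds hy) fun w hw => h0 w hw
    exact mem_of_superset (isOpen_ball.mem_nhds (mem_ball_self (by linarith))) hsub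
  have hTopen : IsOpen {p | p ∈ s ∧ p ∉ S} := by
    apply isOpen_iff_mem_nhds.2
    intro p hp
    rcases Metric.isOpen_iff.1 hs p hp.1 with ⟨ε, hε, hball⟩
    refine mem_of_superset (isOpen_ball.mem_nhds (mem_ball_self (show (0:ℝ) < ε/2 by linarith)))
      ?_
    intro y hy
    refine ⟨hball (ball_subset_ball (by linarith) hy), ?_⟩
    intro hyS
    apply hp.2
    refine ⟨hp.1, ?_⟩
    have h0 : ∀ w ∈ ball y (ε/2), G w = 0 := key p hp.1 ε hε hball y hyS hy
    have hpy : p ∈ ball y (ε/2) := by simpa [mem_ball, dist_comm] using hy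
    exact eventually_of_mem (isOpen_ball.mem_nhds hpy) fun w hw => h0 w hw
  have hxS : x ∈ S := ⟨hx, hx0⟩
  have hcover : s ⊆ S ∪ {p | p ∈ s ∧ p ∉ S} := by
    intro p hp
    by_cases h : p ∈ S
    · exact Or.inl h
    · exact Or.inr ⟨hp, h⟩
  have hmain := hc S {p | p ∈ s ∧ p ∉ S} hSopen hTopen hcover ⟨x, hxS.1, hxS⟩
  intro z hz
  by_cases hzS : z ∈ S
  · exact hzS.2.self_of_nhds
  · exfalso
    rcases hmain ⟨z, hz, hz, hzS⟩ with ⟨y, _, hyS, hyT⟩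
    exact hyT.2 hyS

end RSLAux

open RSLAux Filter Set Topology

/-- Note 2.18.1 (quaternion `ℋ_RSL`-version of Henkin–Leiterer Corollary 1.3.9/1.3.10):
every open convex subset `W` of `ℍ^n` is a domain of `ℋ_RSL`-holomorphy. -/
theorem isRSLDomainOfHolomorphy_of_convex {n : ℕ} (W : Set (Fin n → Quaternion ℝ))
    (hWopen : IsOpen W) (hWconv : Convex ℝ W) :
    IsRSLDomainOfHolomorphy W := by
  intro U V hUopen hVopen hUne hUsub hVW hVconn
  -- find ξ ∈ V \ W
  obtain ⟨ξ, hξV, hξW⟩ : ∃ ξ, ξ ∈ V ∧ ξ ∉ W := by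
    by_contra h
    push_neg at h
    exact hVW (Set.inter_eq_left.2 h)
  -- separate
  obtain ⟨L, hL⟩ := geometric_hahn_banach_open_point hWconv hWopen hξW
  -- complex coefficients
  set a : Fin n → ℂ := fun k => ⟨L (Pi.single k 1), -L (Pi.single k qi)⟩ with ha
  set b : Fin n → ℂ := fun k => ⟨L (Pi.single k qj), L (Pi.single k qk)⟩ with hb
  set ℓ : (Fin n → Quaternion ℝ) → ℂ :=
    fun z => ∑ k, (a k * qt (z k) + b k * conj (qu (z k))) with hℓ
  set ℓ' : (Fin n → ℂ) × (Fin n → ℂ) → ℂ :=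
    fun p => ∑ k, (a k * p.1 k + b k * p.2 k) with hℓ'
  have hre : ∀ z : Fin n → Quaternion ℝ, (ℓ z).re = L z := by
    intro z
    have hterm : ∀ k, (a k * qt (z k) + b k * conj (qu (z k))).re
        = L (Pi.single k (z k)) := by
      intro k
      have : L (Pi.single k (z k)) = (z k).re * L (Pi.single k 1)
          + (z k).imI * L (Pi.single k qi) + (z k).imJ * L (Pi.single k qj)
          + (z k).imK * L (Pi.single k qk) := by
        conv_lhs => rw [q_decomp (z k)]
        simp only [Pi.single_add, Pi.single_smul, map_add, map_smul, smul_eq_mul]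
      rw [this]
      simp only [ha, hb, Complex.add_re, Complex.mul_re, Complex.conj_re,
        Complex.conj_im, qt, qu]
      ring
    calc (ℓ z).re = ∑ k, (a k * qt (z k) + b k * conj (qu (z k))).re := by
          simp [hℓ, Complex.re_sum]
      _ = ∑ k, L (Pi.single k (z k)) := Finset.sum_congr rfl fun k _ => hterm k
      _ = L (∑ k, Pi.single k (z k)) := (map_sum L _ _).symm
      _ = L z := by rw [Finset.univ_sum_single]
  set c : ℂ := ℓ ξ with hc
  have hWne : ∀ z ∈ W, ℓ z ≠ c := by
    intro z hz heq
    have h1 : (ℓ z).re < (ℓ ξ).re := by rw [hre, hre]; exact hL z hz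
    rw [hc] at heq; rw [heq] at h1; exact lt_irrefl _ h1
  -- ℓ' is differentiable
  have hℓ'diff : Differentiable ℂ ℓ' := by
    apply Differentiable.fun_sum
    intro k _
    exact (((differentiable_apply k).comp (differentiable_fst (𝕜 := ℂ) (E := Fin n → ℂ) (F := Fin n → ℂ))).const_mul (a k)).add
      (((differentiable_apply k).comp (differentiable_snd (𝕜 := ℂ) (E := Fin n → ℂ) (F := Fin n → ℂ))).const_mul (b k))
  have hℓΦ : ∀ p : (Fin n → ℂ) × (Fin n → ℂ),
      ℓ (fun k => mkQ (p.1 k) (conj (p.2 k))) = ℓ' p := by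
    intro p
    simp [hℓ, hℓ', qt_mkQ, qu_mkQ]
  -- the RSS function
  set f : (Fin n → Quaternion ℝ) → Quaternion ℝ :=
    fun z => mkQ ((ℓ z - c)⁻¹) 0 with hf
  refine ⟨f, ?_, ?_⟩
  · constructor
    · have heq : ∀ p : (Fin n → ℂ) × (Fin n → ℂ),
          qt (f fun k => mkQ (p.1 k) (conj (p.2 k))) = (ℓ' p - c)⁻¹ := by
        intro p; rw [hf]; simp only [qt_mkQ, hℓΦ]
      have := (hℓ'diff.sub_const c).differentiableOn.inv (fun p hp => by
        have : ℓ' p ≠ c := by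
          rw [← hℓΦ p]; exact hWne _ hp
        exact sub_ne_zero.2 this)
      exact this.congr fun p hp => heq p
    · have heq : ∀ p : (Fin n → ℂ) × (Fin n → ℂ),
          qu (f fun k => mkQ (conj (p.1 k)) (p.2 k)) = 0 := by
        intro p; rw [hf]; simp only [qu_mkQ]
      exact (differentiableOn_const 0).congr fun p hp => heq p
  · rintro g ⟨hg1, -⟩ hEq
    -- setup
    set Φ : (Fin n → ℂ) × (Fin n → ℂ) → (Fin n → Quaternion ℝ) :=
      fun p k => mkQ (p.1 k) (conj (p.2 k)) with hΦ
    have hΦcont : Continuous Φ := by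
      apply continuous_pi
      intro k
      have h1 : Continuous fun p : (Fin n → ℂ) × (Fin n → ℂ) =>
          ((p.1 k, conj (p.2 k)) : ℂ × ℂ) :=
        ((continuous_apply k).comp continuous_fst).prodMk
          (Complex.continuous_conj.comp ((continuous_apply k).comp continuous_snd))
      exact continuous_mkQ.comp h1
    set Ψ : (Fin n → Quaternion ℝ) → (Fin n → ℂ) × (Fin n → ℂ) :=
      fun z => (fun k => qt (z k), fun k => conj (qu (z k))) with hΨ
    have hΨcont : Continuous Ψ := by
      apply Continuous.prodMk
      · exact continuous_pi fun k => continuous_qt.comp (continuous_apply k)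
      · exact continuous_pi fun k =>
          Complex.continuous_conj.comp (continuous_qu.comp (continuous_apply k))
    have hΦΨ : ∀ z, Φ (Ψ z) = z := by
      intro z; funext k
      simp [hΦ, hΨ, Complex.conj_conj, mkQ_qt_qu]
    have hΨΦ : ∀ p, Ψ (Φ p) = p := by
      intro p
      apply Prod.ext
      · funext k; simp [hΦ, hΨ, qt_mkQ]
      · funext k; simp [hΦ, hΨ, qu_mkQ, Complex.conj_conj]
    set V' : Set ((Fin n → ℂ) × (Fin n → ℂ)) := {p | Φ p ∈ V} with hV'
    have hV'open : IsOpen V' := hVopen.preimage hΦcont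
    have hV'img : V' = Ψ '' V := by
      ext p
      constructor
      · intro hp
        exact ⟨Φ p, hp, hΨΦ p⟩
      · rintro ⟨z, hz, rfl⟩
        show Φ (Ψ z) ∈ V
        rw [hΦΨ]; exact hz
    have hV'conn : IsPreconnected V' := by
      rw [hV'img]
      exact (hVconn.image Ψ hΨcont.continuousOn).isPreconnected
    -- the function G
    set h : (Fin n → ℂ) × (Fin n → ℂ) → ℂ :=
      fun p => qt (g fun k => mkQ (p.1 k) (conj (p.2 k))) with hh
    have hhdiff : DifferentiableOn ℂ h V' := hg1
    set G : (Fin n → ℂ) × (Fin n → ℂ) → ℂ :=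
      fun p => (ℓ' p - c) * h p - 1 with hG
    have hGdiff : DifferentiableOn ℂ G V' :=
      (((hℓ'diff.sub_const c).differentiableOn).mul hhdiff).sub_const 1
    -- G vanishes on U'
    obtain ⟨z₀, hz₀⟩ := hUne
    set p₀ := Ψ z₀ with hp₀
    have hp₀U : Φ p₀ ∈ U := by rw [hΦΨ]; exact hz₀
    have hU'sub : ∀ p, Φ p ∈ U → G p = 0 := by
      intro p hpU
      have hpW : Φ p ∈ W := (hUsub hpU).2
      have hgf : g (Φ p) = f (Φ p) := hEq hpU
      have hqt : h p = (ℓ' p - c)⁻¹ := by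
        rw [hh]
        show qt (g (Φ p)) = _
        rw [hgf, hf]
        show qt (mkQ _ 0) = _
        rw [qt_mkQ, hℓΦ]
      have hne : ℓ' p - c ≠ 0 := sub_ne_zero.2 (by rw [← hℓΦ p]; exact hWne _ hpW)
      rw [hG]
      show (ℓ' p - c) * h p - 1 = 0
      rw [hqt, mul_inv_cancel₀ hne, sub_self]
    have hev : G =ᶠ[𝓝 p₀] 0 := by
      have : {p | Φ p ∈ U} ∈ 𝓝 p₀ :=
        (hUopen.preimage hΦcont).mem_nhds hp₀U
      exact eventually_of_mem this fun p hp => hU'sub p hp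
    have hp₀V' : p₀ ∈ V' := by
      show Φ p₀ ∈ V
      exact (hUsub hp₀U).1
    have hall := eqOn_zero_of_diffOn hV'open hV'conn hGdiff hp₀V' hev
    -- evaluate at Ψ ξ
    have hξV' : Ψ ξ ∈ V' := by
      show Φ (Ψ ξ) ∈ V
      rw [hΦΨ]; exact hξV
    have hzero := hall hξV'
    have hℓΨ : ℓ' (Ψ ξ) = c := by
      rw [hc, hℓ', hℓ]
    rw [hG] at hzero
    simp only [Pi.zero_apply] at hzero
    rw [hℓΨ, sub_self, zero_mul, zero_sub] at hzero
    exact (neg_ne_zero.2 one_ne_zero) hzero
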